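/- arXiv:1106.2993 — 4 statements merged into one kernel-verified Lean document; each statement's English description precedes it below -/
import Mathlib

section
/- Let b₀, b₁ be reals with 0 < b₁ ≤ b₀ and b₀ + b₁ < 1, let μ* be the (b₀,b₁)-branching measure on C, and let T be the associated capacity (with T(∅) = 0). Let σ₀, …, σ_n be pairwise incomparable binary strings (no one an initial segment of another), let Q = ⋃_{k=0}^{n} I(σ_k), and let j ≤ n. Then T(Q) − T(⋃_{k ≤ n, k ≠ j} I(σ_k)) ≤ (1 − b₁)^{|σ_j|}. -/
open Set MeasureTheory Topology Filter

/-- Cantor space `2^ℕ`. -/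
abbrev Cantor : Type := ℕ → Bool

/-- The basic interval `I(σ)` of all extensions of the finite binary string `σ`. -/
def cyl (σ : List Bool) : Set Cantor :=
  {x | ∀ i : Fin σ.length, x i = σ.get i}

/-- The space `C` of nonempty closed subsets of Cantor space. -/
abbrev CC : Type := {K : Set Cantor // K.Nonempty ∧ IsClosed K}

/-- The hit-or-miss topology on `C`, generated by the sets
`V(U) = {K : K ∩ U ≠ ∅}` and `W(U) = {K : K ⊆ U}` for `U` open. -/
instance (priority := 10000) hitMissTop : TopologicalSpace CC :=
  TopologicalSpace.generateFrom
    ({S | ∃ U : Set Cantor, IsOpen U ∧ S = {K : CC | (K.1 ∩ U).Nonempty}} ∪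
     {S | ∃ U : Set Cantor, IsOpen U ∧ S = {K : CC | K.1 ⊆ U}})

/-- The Borel σ-algebra of the hit-or-miss topology. -/
instance (priority := 10000) hitMissMeasurable : MeasurableSpace CC := borel CC

/-- `A` is a finite tree of height `n` without dead ends. -/
def FinTree (n : ℕ) (A : Finset (List Bool)) : Prop :=
  A.Nonempty ∧
  (∀ σ ∈ A, σ.length ≤ n) ∧
  (∀ σ τ : List Bool, σ <+: τ → τ ∈ A → σ ∈ A) ∧
  (∀ σ ∈ A, σ.length < n → σ ++ [false] ∈ A ∨ σ ++ [true] ∈ A)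

/-- `U_A = {K ∈ C : T_K ∩ {0,1}^{≤ n} = A}`. -/
def UA (n : ℕ) (A : Finset (List Bool)) : Set CC :=
  {K | ∀ σ : List Bool, σ.length ≤ n → (σ ∈ A ↔ (K.1 ∩ cyl σ).Nonempty)}

/-- The weight of a node `σ` of `A` in the symmetric branching process with parameter `β`. -/
noncomputable def symWeight (β : List Bool → ℝ) (A : Finset (List Bool)) (σ : List Bool) : ℝ :=
  if σ ++ [false] ∈ A ∧ σ ++ [true] ∈ A then 1 - 2 * β σ else β σ

/-- `μ` is the symmetric branching measure on `C` with parameter `β`. -/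
def IsSymBranching (β : List Bool → ℝ) (μ : Measure CC) : Prop :=
  IsProbabilityMeasure μ ∧
  ∀ (n : ℕ) (A : Finset (List Bool)), FinTree n A →
    (μ (UA n A)).toReal = ∏ σ ∈ A.filter (fun σ => σ.length < n), symWeight β A σ

/-- The weight of a node `σ` of `A` in the `(b₀,b₁)`-branching process. -/
noncomputable def asymWeight (b0 b1 : ℝ) (A : Finset (List Bool)) (σ : List Bool) : ℝ :=
  if σ ++ [false] ∈ A ∧ σ ++ [true] ∈ A then 1 - b0 - b1
  else if σ ++ [false] ∈ A then b0 else b1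

/-- `μ` is the `(b₀,b₁)`-branching measure on `C`. -/
def IsBranching (b0 b1 : ℝ) (μ : Measure CC) : Prop :=
  IsProbabilityMeasure μ ∧
  ∀ (n : ℕ) (A : Finset (List Bool)), FinTree n A →
    (μ (UA n A)).toReal = ∏ σ ∈ A.filter (fun σ => σ.length < n), asymWeight b0 b1 A σ

/-- The capacity `T(Q) = μ*({K ∈ C : K ∩ Q ≠ ∅})` associated to a measure on `C`. -/
noncomputable def cap (μ : Measure CC) (Q : Set Cantor) : ℝ :=
  (μ {K : CC | (K.1 ∩ Q).Nonempty}).toReal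


open scoped Classical

noncomputable section

/-- strings of length ≤ n -/
def strs : ℕ → Finset (List Bool)
  | 0 => {[]}
  | n+1 => insert [] ((strs n).image (false :: ·) ∪ (strs n).image (true :: ·))

lemma mem_strs {n : ℕ} {σ : List Bool} : σ ∈ strs n ↔ σ.length ≤ n := by
  induction n generalizing σ with
  | zero => simp [strs, List.length_eq_zero_iff]
  | succ n ih =>
    cases σ with
    | nil => simp [strs]
    | cons c s =>
      simp [strs, ih]
      cases c <;> simp

def Trees (n : ℕ) : Finset (Finset (List Bool)) :=
  (strs n).powerset.filter (fun A => FinTree n A)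

lemma mem_Trees {n : ℕ} {A : Finset (List Bool)} : A ∈ Trees n ↔ FinTree n A := by
  simp only [Trees, Finset.mem_filter, Finset.mem_powerset, and_iff_right_iff_imp]
  intro h σ hσ
  exact mem_strs.2 (h.2.1 σ hσ)

def sub (c : Bool) (A : Finset (List Bool)) : Finset (List Bool) :=
  (A.filter (fun σ => σ.head? = some c)).image List.tail

lemma mem_sub {c : Bool} {A : Finset (List Bool)} {σ : List Bool} :
    σ ∈ sub c A ↔ c :: σ ∈ A := by
  simp only [sub, Finset.mem_image, Finset.mem_filter]
  constructor
  · rintro ⟨t, ⟨ht, hh⟩, rfl⟩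
    cases t with
    | nil => simp at hh
    | cons a s => simp at hh; subst hh; exact ht
  · intro h; exact ⟨c :: σ, ⟨h, rfl⟩, rfl⟩

def emb (c : Bool) (B : Finset (List Bool)) : Finset (List Bool) := B.image (c :: ·)

lemma mem_emb {c : Bool} {B : Finset (List Bool)} {σ : List Bool} :
    σ ∈ emb c B ↔ ∃ s ∈ B, σ = c :: s := by
  simp [emb, eq_comm]

lemma cons_mem_emb {c c' : Bool} {B : Finset (List Bool)} {s : List Bool} :
    c :: s ∈ emb c' B ↔ c = c' ∧ s ∈ B := by
  simp only [mem_emb]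
  constructor
  · rintro ⟨t, ht, he⟩
    obtain ⟨rfl, rfl⟩ : c = c' ∧ s = t := by simpa using he
    exact ⟨rfl, ht⟩
  · rintro ⟨rfl, hs⟩; exact ⟨s, hs, rfl⟩

lemma nil_notMem_emb {c : Bool} {B : Finset (List Bool)} : [] ∉ emb c B := by
  simp [mem_emb]

def glueF (B : Finset (List Bool)) : Finset (List Bool) := insert [] (emb false B)
def glueT (B : Finset (List Bool)) : Finset (List Bool) := insert [] (emb true B)
def glueB (B C : Finset (List Bool)) : Finset (List Bool) :=
  insert [] (emb false B ∪ emb true C)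

lemma sub_glueB (c : Bool) (B C : Finset (List Bool)) :
    sub c (glueB B C) = if c then C else B := by
  ext σ
  cases c <;>
    simp [mem_sub, glueB, Finset.mem_insert, Finset.mem_union, cons_mem_emb]

lemma sub_glueF (c : Bool) (B : Finset (List Bool)) :
    sub c (glueF B) = if c then ∅ else B := by
  ext σ
  cases c <;> simp [mem_sub, glueF, Finset.mem_insert, cons_mem_emb]

lemma sub_glueT (c : Bool) (B : Finset (List Bool)) :
    sub c (glueT B) = if c then B else ∅ := by
  ext σ
  cases c <;> simp [mem_sub, glueT, Finset.mem_insert, cons_mem_emb]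

lemma FinTree.nil_mem {n : ℕ} {A : Finset (List Bool)} (h : FinTree n A) : [] ∈ A := by
  obtain ⟨⟨σ, hσ⟩, -, hpre, -⟩ := h
  exact hpre [] σ List.nil_prefix hσ

lemma FinTree.root_child {A : Finset (List Bool)} {m : ℕ} (h : FinTree (m+1) A) :
    [false] ∈ A ∨ [true] ∈ A := by
  simpa using h.2.2.2 [] h.nil_mem (by simp)

lemma FinTree.sub {m : ℕ} {A : Finset (List Bool)} (h : FinTree (m+1) A)
    (c : Bool) (hc : [c] ∈ A) : FinTree m (sub c A) := by
  obtain ⟨-, hlen, hpre, hnd⟩ := h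
  refine ⟨⟨[], by simpa [mem_sub] using hc⟩, ?_, ?_, ?_⟩
  · intro σ hσ
    have := hlen _ (mem_sub.1 hσ)
    simpa using this
  · intro σ τ hστ hτ
    exact mem_sub.2 (hpre _ _ (List.cons_prefix_cons.2 ⟨rfl, hστ⟩) (mem_sub.1 hτ))
  · intro σ hσ hlt
    have := hnd (c :: σ) (mem_sub.1 hσ) (by simpa using Nat.succ_lt_succ hlt)
    simpa [mem_sub, List.cons_append] using this

lemma sub_eq_empty {m : ℕ} {A : Finset (List Bool)} (h : FinTree (m+1) A)
    (c : Bool) (hc : [c] ∉ A) : sub c A = ∅ := by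
  ext σ
  simp only [mem_sub, Finset.notMem_empty, iff_false]
  intro hmem
  exact hc (h.2.2.1 _ _ (by simp [List.cons_prefix_cons]) hmem)

lemma glueB_sub {m : ℕ} {A : Finset (List Bool)} (h : FinTree (m+1) A) :
    glueB (sub false A) (sub true A) = A := by
  ext σ
  cases σ with
  | nil => simp [glueB, h.nil_mem]
  | cons c s =>
    cases c <;>
      simp [glueB, Finset.mem_insert, Finset.mem_union, cons_mem_emb, mem_sub]

lemma FinTree.glueB {m : ℕ} {B C : Finset (List Bool)}
    (hB : FinTree m B) (hC : FinTree m C) : FinTree (m+1) (glueB B C) := by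
  refine ⟨⟨[], by simp [_root_.glueB]⟩, ?_, ?_, ?_⟩
  · intro σ hσ
    rcases Finset.mem_insert.1 hσ with rfl | hσ
    · simp
    rcases Finset.mem_union.1 hσ with hσ | hσ <;>
    · obtain ⟨s, hs, rfl⟩ := mem_emb.1 hσ
      simpa using (by first | exact hB.2.1 s hs | exact hC.2.1 s hs)
  · intro σ τ hστ hτ
    cases σ with
    | nil => simp [_root_.glueB]
    | cons c s =>
      cases τ with
      | nil => exact absurd hστ (by simp)
      | cons c' t =>
        obtain ⟨rfl, hst⟩ := List.cons_prefix_cons.1 hστ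
        rcases Finset.mem_insert.1 hτ with he | hτ
        · exact absurd he (by simp)
        rcases Finset.mem_union.1 hτ with hτ | hτ <;>
          obtain ⟨u, hu, he⟩ := mem_emb.1 hτ <;>
          obtain ⟨rfl, rfl⟩ : _ ∧ t = u := by simpa using he
        · exact Finset.mem_insert_of_mem (Finset.mem_union_left _
            (mem_emb.2 ⟨s, hB.2.2.1 _ _ hst hu, rfl⟩))
        · exact Finset.mem_insert_of_mem (Finset.mem_union_right _
            (mem_emb.2 ⟨s, hC.2.2.1 _ _ hst hu, rfl⟩))
  · intro σ hσ hlt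
    rcases Finset.mem_insert.1 hσ with rfl | hσ
    · left
      exact Finset.mem_insert_of_mem (Finset.mem_union_left _
        (mem_emb.2 ⟨[], hB.nil_mem, rfl⟩))
    rcases Finset.mem_union.1 hσ with hσ | hσ <;>
      obtain ⟨s, hs, rfl⟩ := mem_emb.1 hσ
    · rcases hB.2.2.2 s hs (by simpa using hlt) with h' | h'
      · exact Or.inl (Finset.mem_insert_of_mem (Finset.mem_union_left _
          (mem_emb.2 ⟨s ++ [false], h', by simp⟩)))
      · exact Or.inr (Finset.mem_insert_of_mem (Finset.mem_union_left _
          (mem_emb.2 ⟨s ++ [true], h', by simp⟩)))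
    · rcases hC.2.2.2 s hs (by simpa using hlt) with h' | h'
      · exact Or.inl (Finset.mem_insert_of_mem (Finset.mem_union_right _
          (mem_emb.2 ⟨s ++ [false], h', by simp⟩)))
      · exact Or.inr (Finset.mem_insert_of_mem (Finset.mem_union_right _
          (mem_emb.2 ⟨s ++ [true], h', by simp⟩)))

lemma FinTree.glue1 {m : ℕ} {B : Finset (List Bool)} (hB : FinTree m B) (c : Bool) :
    FinTree (m+1) (insert [] (emb c B)) := by
  refine ⟨⟨[], by simp⟩, ?_, ?_, ?_⟩
  · intro σ hσ
    rcases Finset.mem_insert.1 hσ with rfl | hσ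
    · simp
    · obtain ⟨s, hs, rfl⟩ := mem_emb.1 hσ
      simpa using hB.2.1 s hs
  · intro σ τ hστ hτ
    cases σ with
    | nil => simp
    | cons c' s =>
      cases τ with
      | nil => exact absurd hστ (by simp)
      | cons c'' t =>
        obtain ⟨rfl, hst⟩ := List.cons_prefix_cons.1 hστ
        rcases Finset.mem_insert.1 hτ with he | hτ
        · exact absurd he (by simp)
        · obtain ⟨u, hu, he⟩ := mem_emb.1 hτ
          obtain ⟨rfl, rfl⟩ : _ ∧ t = u := by simpa using he
          exact Finset.mem_insert_of_mem (mem_emb.2 ⟨s, hB.2.2.1 _ _ hst hu, rfl⟩)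
  · intro σ hσ hlt
    rcases Finset.mem_insert.1 hσ with rfl | hσ
    · have : [c] ∈ insert ([] : List Bool) (emb c B) :=
        Finset.mem_insert_of_mem (mem_emb.2 ⟨[], hB.nil_mem, rfl⟩)
      cases c
      · exact Or.inl this
      · exact Or.inr this
    · obtain ⟨s, hs, rfl⟩ := mem_emb.1 hσ
      rcases hB.2.2.2 s hs (by simpa using hlt) with h' | h'
      · exact Or.inl (Finset.mem_insert_of_mem (mem_emb.2 ⟨s ++ [false], h', by simp⟩))
      · exact Or.inr (Finset.mem_insert_of_mem (mem_emb.2 ⟨s ++ [true], h', by simp⟩))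

lemma FinTree.glueF {m : ℕ} {B : Finset (List Bool)} (hB : FinTree m B) :
    FinTree (m+1) (glueF B) := hB.glue1 false

lemma FinTree.glueT {m : ℕ} {B : Finset (List Bool)} (hB : FinTree m B) :
    FinTree (m+1) (glueT B) := hB.glue1 true

lemma glueF_sub {m : ℕ} {A : Finset (List Bool)} (h : FinTree (m+1) A)
    (hT : [true] ∉ A) : glueF (sub false A) = A := by
  have := glueB_sub h
  rwa [sub_eq_empty h true hT, show glueB (sub false A) ∅ = glueF (sub false A) by
    simp [glueB, glueF, emb]] at this

lemma glueT_sub {m : ℕ} {A : Finset (List Bool)} (h : FinTree (m+1) A)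
    (hF : [false] ∉ A) : glueT (sub true A) = A := by
  have := glueB_sub h
  rwa [sub_eq_empty h false hF, show glueB ∅ (sub true A) = glueT (sub true A) by
    simp [glueB, glueT, emb]] at this

noncomputable def Pw (b0 b1 : ℝ) (n : ℕ) (A : Finset (List Bool)) : ℝ :=
  ∏ σ ∈ A.filter (fun σ => σ.length < n), asymWeight b0 b1 A σ

variable {b0 b1 : ℝ}

lemma asymWeight_cons (A : Finset (List Bool)) (c : Bool) (s : List Bool) :
    asymWeight b0 b1 A (c :: s) = asymWeight b0 b1 (sub c A) s := by
  simp [asymWeight, mem_sub, List.cons_append]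

lemma asymWeight_nonneg (hb1 : 0 < b1) (hb01 : b1 ≤ b0) (hsum : b0 + b1 < 1)
    (A : Finset (List Bool)) (σ : List Bool) : 0 ≤ asymWeight b0 b1 A σ := by
  unfold asymWeight
  split_ifs <;> linarith

lemma Pw_nonneg (hb1 : 0 < b1) (hb01 : b1 ≤ b0) (hsum : b0 + b1 < 1)
    (n : ℕ) (A : Finset (List Bool)) : 0 ≤ Pw b0 b1 n A :=
  Finset.prod_nonneg fun σ _ => asymWeight_nonneg hb1 hb01 hsum A σ

lemma Pw_empty (n : ℕ) : Pw b0 b1 n (∅ : Finset (List Bool)) = 1 := by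
  simp [Pw]

lemma filter_decomp {m : ℕ} {A : Finset (List Bool)} (h : FinTree (m+1) A) :
    A.filter (fun σ => σ.length < m + 1)
      = insert [] ((((sub false A).filter (fun σ => σ.length < m)).image (false :: ·))
          ∪ (((sub true A).filter (fun σ => σ.length < m)).image (true :: ·))) := by
  ext σ
  cases σ with
  | nil => simp [h.nil_mem]
  | cons c s =>
    cases c <;>
      simp [Finset.mem_filter, Finset.mem_insert, Finset.mem_union, Finset.mem_image,
        mem_sub, Nat.succ_lt_succ_iff] <;>
      aesop

lemma Pw_decomp {m : ℕ} {A : Finset (List Bool)} (h : FinTree (m+1) A) :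
    Pw b0 b1 (m+1) A
      = asymWeight b0 b1 A [] * Pw b0 b1 m (sub false A) * Pw b0 b1 m (sub true A) := by
  have hinj : ∀ c : Bool, Function.Injective (c :: · : List Bool → List Bool) :=
    fun c a b hab => by simpa using hab
  have hdisj : Disjoint (((sub false A).filter (fun σ => σ.length < m)).image (false :: ·))
      (((sub true A).filter (fun σ => σ.length < m)).image (true :: ·)) := by
    simp only [Finset.disjoint_left, Finset.mem_image]
    rintro σ ⟨s, -, rfl⟩ ⟨t, -, h'⟩
    simp at h'
  have hnil : ([] : List Bool) ∉
      (((sub false A).filter (fun σ => σ.length < m)).image (false :: ·))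
        ∪ (((sub true A).filter (fun σ => σ.length < m)).image (true :: ·)) := by
    simp
  rw [Pw, filter_decomp h, Finset.prod_insert hnil, Finset.prod_union hdisj,
    Finset.prod_image (fun a _ b _ hab => hinj false hab),
    Finset.prod_image (fun a _ b _ hab => hinj true hab)]
  simp only [asymWeight_cons]
  ring_nf
  rfl

lemma Pw_glueB {m : ℕ} {B C : Finset (List Bool)} (hB : FinTree m B) (hC : FinTree m C) :
    Pw b0 b1 (m+1) (glueB B C) = (1 - b0 - b1) * (Pw b0 b1 m B * Pw b0 b1 m C) := by
  rw [Pw_decomp (hB.glueB hC), sub_glueB, sub_glueB]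
  norm_num
  have hF : ([] : List Bool) ++ [false] ∈ glueB B C :=
    Finset.mem_insert_of_mem (Finset.mem_union_left _ (mem_emb.2 ⟨[], hB.nil_mem, rfl⟩))
  have hT : ([] : List Bool) ++ [true] ∈ glueB B C :=
    Finset.mem_insert_of_mem (Finset.mem_union_right _ (mem_emb.2 ⟨[], hC.nil_mem, rfl⟩))
  rw [asymWeight, if_pos ⟨hF, hT⟩]
  ring

lemma Pw_glueF {m : ℕ} {B : Finset (List Bool)} (hB : FinTree m B) :
    Pw b0 b1 (m+1) (glueF B) = b0 * Pw b0 b1 m B := by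
  rw [Pw_decomp hB.glueF, sub_glueF, sub_glueF]
  norm_num
  have hF : ([] : List Bool) ++ [false] ∈ glueF B :=
    Finset.mem_insert_of_mem (mem_emb.2 ⟨[], hB.nil_mem, rfl⟩)
  have hT : ([] : List Bool) ++ [true] ∉ glueF B := by
    simp [glueF, mem_emb]
  rw [asymWeight, if_neg (by tauto), if_pos hF]
  simp [Pw_empty]

lemma Pw_glueT {m : ℕ} {B : Finset (List Bool)} (hB : FinTree m B) :
    Pw b0 b1 (m+1) (glueT B) = b1 * Pw b0 b1 m B := by
  rw [Pw_decomp hB.glueT, sub_glueT, sub_glueT]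
  norm_num
  have hT : ([] : List Bool) ++ [true] ∈ glueT B :=
    Finset.mem_insert_of_mem (mem_emb.2 ⟨[], hB.nil_mem, rfl⟩)
  have hF : ([] : List Bool) ++ [false] ∉ glueT B := by
    simp [glueT, mem_emb]
  rw [asymWeight, if_neg (by tauto), if_neg hF]
  simp [Pw_empty]

lemma sum_split (m : ℕ) (q : Finset (List Bool) → ℝ) :
    ∑ A ∈ Trees (m+1), q A
      = (∑ B ∈ Trees m, q (glueF B)) + (∑ B ∈ Trees m, q (glueT B))
        + ∑ B ∈ Trees m, ∑ C ∈ Trees m, q (glueB B C) := by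
  have h1 : ∑ A ∈ (Trees (m+1)).filter (fun A => [true] ∉ A), q A
      = ∑ B ∈ Trees m, q (glueF B) := by
    apply Finset.sum_bij' (i := fun A _ => sub false A)
      (j := fun B _ => glueF B)
    · intro A hA
      obtain ⟨hA, hT⟩ := Finset.mem_filter.1 hA
      have hA := mem_Trees.1 hA
      have hF : [false] ∈ A := (hA.root_child).resolve_right hT
      exact mem_Trees.2 (hA.sub false hF)
    · intro B hB
      refine Finset.mem_filter.2 ⟨mem_Trees.2 (mem_Trees.1 hB).glueF, ?_⟩
      simp [glueF, mem_emb]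
    · intro A hA
      obtain ⟨hA, hT⟩ := Finset.mem_filter.1 hA
      exact glueF_sub (mem_Trees.1 hA) hT
    · intro B hB
      have := sub_glueF false B
      simpa using this
    · intro A hA
      obtain ⟨hA, hT⟩ := Finset.mem_filter.1 hA
      rw [glueF_sub (mem_Trees.1 hA) hT]
  have h2 : ∑ A ∈ ((Trees (m+1)).filter (fun A => [true] ∈ A)).filter
        (fun A => [false] ∉ A), q A
      = ∑ B ∈ Trees m, q (glueT B) := by
    apply Finset.sum_bij' (i := fun A _ => sub true A)
      (j := fun B _ => glueT B)
    · intro A hA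
      obtain ⟨hA', hF⟩ := Finset.mem_filter.1 hA
      obtain ⟨hA', hT⟩ := Finset.mem_filter.1 hA'
      exact mem_Trees.2 ((mem_Trees.1 hA').sub true hT)
    · intro B hB
      refine Finset.mem_filter.2 ⟨Finset.mem_filter.2
        ⟨mem_Trees.2 (mem_Trees.1 hB).glueT, ?_⟩, ?_⟩
      · exact Finset.mem_insert_of_mem (mem_emb.2 ⟨[], (mem_Trees.1 hB).nil_mem, rfl⟩)
      · simp [glueT, mem_emb]
    · intro A hA
      obtain ⟨hA', hF⟩ := Finset.mem_filter.1 hA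
      obtain ⟨hA', hT⟩ := Finset.mem_filter.1 hA'
      exact glueT_sub (mem_Trees.1 hA') hF
    · intro B hB
      have := sub_glueT true B
      simpa using this
    · intro A hA
      obtain ⟨hA', hF⟩ := Finset.mem_filter.1 hA
      obtain ⟨hA', hT⟩ := Finset.mem_filter.1 hA'
      rw [glueT_sub (mem_Trees.1 hA') hF]
  have h3 : ∑ A ∈ ((Trees (m+1)).filter (fun A => [true] ∈ A)).filter
        (fun A => [false] ∈ A), q A
      = ∑ p ∈ Trees m ×ˢ Trees m, q (glueB p.1 p.2) := by
    apply Finset.sum_bij' (i := fun A _ => (sub false A, sub true A))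
      (j := fun p _ => glueB p.1 p.2)
    · intro A hA
      obtain ⟨hA', hF⟩ := Finset.mem_filter.1 hA
      obtain ⟨hA', hT⟩ := Finset.mem_filter.1 hA'
      exact Finset.mem_product.2 ⟨mem_Trees.2 ((mem_Trees.1 hA').sub false hF),
        mem_Trees.2 ((mem_Trees.1 hA').sub true hT)⟩
    · intro p hp
      obtain ⟨hB, hC⟩ := Finset.mem_product.1 hp
      refine Finset.mem_filter.2 ⟨Finset.mem_filter.2
        ⟨mem_Trees.2 ((mem_Trees.1 hB).glueB (mem_Trees.1 hC)), ?_⟩, ?_⟩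
      · exact Finset.mem_insert_of_mem (Finset.mem_union_right _
          (mem_emb.2 ⟨[], (mem_Trees.1 hC).nil_mem, rfl⟩))
      · exact Finset.mem_insert_of_mem (Finset.mem_union_left _
          (mem_emb.2 ⟨[], (mem_Trees.1 hB).nil_mem, rfl⟩))
    · intro A hA
      obtain ⟨hA', hF⟩ := Finset.mem_filter.1 hA
      exact glueB_sub (mem_Trees.1 (Finset.mem_filter.1 hA').1)
    · intro p hp
      have h1 := sub_glueB false p.1 p.2
      have h2 := sub_glueB true p.1 p.2
      simp only [if_neg, if_pos] at h1 h2
      simp at h1 h2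
      simp [h1, h2]
    · intro A hA
      obtain ⟨hA', hF⟩ := Finset.mem_filter.1 hA
      rw [glueB_sub (mem_Trees.1 (Finset.mem_filter.1 hA').1)]
  have hs1 := Finset.sum_filter_add_sum_filter_not (Trees (m+1)) (fun A => [true] ∈ A) q
  have hs2 := Finset.sum_filter_add_sum_filter_not
    ((Trees (m+1)).filter (fun A => [true] ∈ A)) (fun A => [false] ∈ A) q
  have h3' : ∑ A ∈ ((Trees (m+1)).filter (fun A => [true] ∈ A)).filter
        (fun A => [false] ∈ A), q A
      = ∑ B ∈ Trees m, ∑ C ∈ Trees m, q (glueB B C) :=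
    h3.trans (Finset.sum_product _ _ _)
  linarith [hs1, hs2, h1, h2, h3']

lemma Trees_zero : Trees 0 = {{([] : List Bool)}} := by
  ext A
  simp only [mem_Trees, Finset.mem_singleton]
  constructor
  · intro h
    ext σ
    simp only [Finset.mem_singleton]
    constructor
    · intro hσ
      exact List.length_eq_zero_iff.1 (Nat.le_zero.1 (h.2.1 σ hσ))
    · rintro rfl; exact h.nil_mem
  · rintro rfl
    refine ⟨⟨[], by simp⟩, by simp, ?_, by simp⟩
    intro σ τ hστ hτ
    simp only [Finset.mem_singleton] at hτ ⊢
    subst hτ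
    exact List.prefix_nil.1 hστ

lemma sum_Trees_one (hb1 : 0 < b1) (hb01 : b1 ≤ b0) (hsum : b0 + b1 < 1) :
    ∀ m : ℕ, ∑ A ∈ Trees m, Pw b0 b1 m A = 1 := by
  intro m
  induction m with
  | zero => simp [Trees_zero, Pw]
  | succ m ih =>
    rw [sum_split m (Pw b0 b1 (m+1))]
    have e1 : ∑ B ∈ Trees m, Pw b0 b1 (m+1) (glueF B)
        = b0 * ∑ B ∈ Trees m, Pw b0 b1 m B := by
      rw [Finset.mul_sum]
      exact Finset.sum_congr rfl fun B hB => Pw_glueF (mem_Trees.1 hB)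
    have e2 : ∑ B ∈ Trees m, Pw b0 b1 (m+1) (glueT B)
        = b1 * ∑ B ∈ Trees m, Pw b0 b1 m B := by
      rw [Finset.mul_sum]
      exact Finset.sum_congr rfl fun B hB => Pw_glueT (mem_Trees.1 hB)
    have e3 : ∑ B ∈ Trees m, ∑ C ∈ Trees m, Pw b0 b1 (m+1) (glueB B C)
        = (1 - b0 - b1) * ((∑ B ∈ Trees m, Pw b0 b1 m B)
            * ∑ C ∈ Trees m, Pw b0 b1 m C) := by
      rw [Finset.sum_mul_sum, Finset.mul_sum]
      refine Finset.sum_congr rfl fun B hB => ?_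
      rw [Finset.mul_sum]
      exact Finset.sum_congr rfl fun C hC =>
        Pw_glueB (mem_Trees.1 hB) (mem_Trees.1 hC)
    rw [e1, e2, e3, ih]
    ring

lemma mem_glueF {B : Finset (List Bool)} {c : Bool} {s : List Bool} :
    c :: s ∈ glueF B ↔ c = false ∧ s ∈ B := by
  simp [glueF, cons_mem_emb]

lemma mem_glueT {B : Finset (List Bool)} {c : Bool} {s : List Bool} :
    c :: s ∈ glueT B ↔ c = true ∧ s ∈ B := by
  simp [glueT, cons_mem_emb]

lemma mem_glueB {B C : Finset (List Bool)} {c : Bool} {s : List Bool} :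
    c :: s ∈ glueB B C ↔ (c = false ∧ s ∈ B) ∨ (c = true ∧ s ∈ C) := by
  simp [glueB, Finset.mem_insert, Finset.mem_union, cons_mem_emb]

lemma F_le (hb1 : 0 < b1) (hb01 : b1 ≤ b0) (hsum : b0 + b1 < 1) :
    ∀ τ : List Bool,
      ∑ A ∈ (Trees τ.length).filter (fun A => τ ∈ A), Pw b0 b1 τ.length A
        ≤ (1 - b1) ^ τ.length := by
  intro τ
  induction τ with
  | nil =>
    rw [Finset.filter_true_of_mem (fun A hA => (mem_Trees.1 hA).nil_mem)]
    simp [sum_Trees_one hb1 hb01 hsum 0]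
  | cons c rest ih =>
    set m := rest.length with hm
    have hlen : (c :: rest).length = m + 1 := rfl
    rw [hlen, Finset.sum_filter, sum_split m (fun A => if c :: rest ∈ A then Pw b0 b1 (m+1) A else 0)]
    have hFnonneg : 0 ≤ ∑ A ∈ (Trees m).filter (fun A => rest ∈ A), Pw b0 b1 m A :=
      Finset.sum_nonneg fun A _ => Pw_nonneg hb1 hb01 hsum m A
    set F : ℝ := ∑ A ∈ (Trees m).filter (fun A => rest ∈ A), Pw b0 b1 m A with hF
    have e1 : ∑ B ∈ Trees m, (if c :: rest ∈ glueF B then Pw b0 b1 (m+1) (glueF B) else 0)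
        = if c = false then b0 * F else 0 := by
      cases c
      · simp only [if_pos rfl, hF, Finset.sum_filter, Finset.mul_sum]
        refine Finset.sum_congr rfl fun B hB => ?_
        have hc : ((false : Bool) :: rest ∈ glueF B) ↔ rest ∈ B := by simp [mem_glueF]
        rw [if_congr hc (Pw_glueF (mem_Trees.1 hB)) rfl]
        split_ifs <;> ring
      · simp only [reduceCtorEq, if_false]
        refine Finset.sum_eq_zero fun B hB => ?_
        rw [if_neg (by simp [mem_glueF])]
    have e2 : ∑ B ∈ Trees m, (if c :: rest ∈ glueT B then Pw b0 b1 (m+1) (glueT B) else 0)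
        = if c = true then b1 * F else 0 := by
      cases c
      · simp only [reduceCtorEq, if_false]
        refine Finset.sum_eq_zero fun B hB => ?_
        rw [if_neg (by simp [mem_glueT])]
      · simp only [if_pos rfl, hF, Finset.sum_filter, Finset.mul_sum]
        refine Finset.sum_congr rfl fun B hB => ?_
        have hc : ((true : Bool) :: rest ∈ glueT B) ↔ rest ∈ B := by simp [mem_glueT]
        rw [if_congr hc (Pw_glueT (mem_Trees.1 hB)) rfl]
        split_ifs <;> ring
    have e3 : ∑ B ∈ Trees m, ∑ C ∈ Trees m,
          (if c :: rest ∈ glueB B C then Pw b0 b1 (m+1) (glueB B C) else 0)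
        = (1 - b0 - b1) * F := by
      cases c
      · rw [hF, Finset.sum_filter, Finset.mul_sum]
        refine Finset.sum_congr rfl fun B hB => ?_
        have : ∀ C ∈ Trees m,
            (if (false : Bool) :: rest ∈ glueB B C then Pw b0 b1 (m+1) (glueB B C) else 0)
              = if rest ∈ B then (1 - b0 - b1) * (Pw b0 b1 m B * Pw b0 b1 m C) else 0 :=
          fun C hC => if_congr (show ((false : Bool) :: rest ∈ glueB B C) ↔ rest ∈ B by
              simp [mem_glueB])
            (Pw_glueB (mem_Trees.1 hB) (mem_Trees.1 hC)) rfl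
        rw [Finset.sum_congr rfl this]
        by_cases hr : rest ∈ B
        · simp only [if_pos hr]
          rw [← Finset.mul_sum]
          have : ∑ C ∈ Trees m, Pw b0 b1 m B * Pw b0 b1 m C
              = Pw b0 b1 m B * ∑ C ∈ Trees m, Pw b0 b1 m C := by
            rw [Finset.mul_sum]
          rw [this, sum_Trees_one hb1 hb01 hsum m]
          ring
        · simp [hr]
      · rw [hF, Finset.sum_filter, Finset.mul_sum]
        rw [Finset.sum_comm]
        refine Finset.sum_congr rfl fun C hC => ?_
        have : ∀ B ∈ Trees m,
            (if (true : Bool) :: rest ∈ glueB B C then Pw b0 b1 (m+1) (glueB B C) else 0)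
              = if rest ∈ C then (1 - b0 - b1) * (Pw b0 b1 m B * Pw b0 b1 m C) else 0 :=
          fun B hB => if_congr (show ((true : Bool) :: rest ∈ glueB B C) ↔ rest ∈ C by
              simp [mem_glueB])
            (Pw_glueB (mem_Trees.1 hB) (mem_Trees.1 hC)) rfl
        rw [Finset.sum_congr rfl this]
        by_cases hr : rest ∈ C
        · simp only [if_pos hr]
          have : ∑ B ∈ Trees m, (1 - b0 - b1) * (Pw b0 b1 m B * Pw b0 b1 m C)
              = ((1 - b0 - b1) * Pw b0 b1 m C) * ∑ B ∈ Trees m, Pw b0 b1 m B := by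
            rw [Finset.mul_sum]
            exact Finset.sum_congr rfl fun B _ => by ring
          rw [this, sum_Trees_one hb1 hb01 hsum m]
          ring
        · simp [hr]
    rw [e1, e2, e3, pow_succ]
    have hpow : (0:ℝ) ≤ (1 - b1) ^ m := pow_nonneg (by linarith) m
    have h1b : (0:ℝ) ≤ 1 - b1 := by linarith
    cases c
    · norm_num
      nlinarith
    · norm_num
      nlinarith

lemma mem_cyl {x : Cantor} {s : List Bool} :
    x ∈ cyl s ↔ ∀ (i : ℕ) (h : i < s.length), x i = s[i] := by
  constructor
  · intro hx i h
    exact hx ⟨i, h⟩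
  · intro hx i
    exact hx i i.2

lemma cyl_mono {s t : List Bool} (h : s <+: t) : cyl t ⊆ cyl s := by
  intro x hx
  rw [mem_cyl] at hx ⊢
  intro i hi
  rw [hx i (lt_of_lt_of_le hi h.length_le), h.getElem hi]

lemma mem_cyl_append {x : Cantor} {s : List Bool} {b : Bool} :
    x ∈ cyl (s ++ [b]) ↔ x ∈ cyl s ∧ x s.length = b := by
  simp only [mem_cyl, List.length_append, List.length_singleton]
  constructor
  · intro h
    refine ⟨fun i hi => ?_, ?_⟩
    · rw [h i (by omega), List.getElem_append_left hi]
    · have := h s.length (by omega)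
      rw [show (s ++ [b])[s.length]'(by simp) = b from by
        simpa using List.getElem_concat_length s b s.length rfl (by simp)] at this
      exact this
  · rintro ⟨h1, h2⟩ i hi
    rcases Nat.lt_or_ge i s.length with hi' | hi'
    · rw [List.getElem_append_left hi', h1 i hi']
    · have : i = s.length := by omega
      subst this
      rw [show (s ++ [b])[s.length]'(by simp) = b from by
        simpa using List.getElem_concat_length s b s.length rfl (by simp)]
      exact h2

lemma hit_le {b0 b1 : ℝ} (hb1 : 0 < b1) (hb01 : b1 ≤ b0) (hsum : b0 + b1 < 1)
    (μ : Measure CC) (hμ : IsBranching b0 b1 μ) (τ : List Bool) :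
    (μ {K : CC | (K.1 ∩ cyl τ).Nonempty}).toReal ≤ (1 - b1) ^ τ.length := by
  haveI := hμ.1
  set nn := τ.length with hnn
  have cover : {K : CC | (K.1 ∩ cyl τ).Nonempty}
      ⊆ ⋃ A ∈ (Trees nn).filter (fun A => τ ∈ A), UA nn A := by
    intro K hK
    set A : Finset (List Bool) := (strs nn).filter (fun s => (K.1 ∩ cyl s).Nonempty)
      with hA
    have memA : ∀ s : List Bool, s ∈ A ↔ s.length ≤ nn ∧ (K.1 ∩ cyl s).Nonempty := by
      intro s
      simp [hA, mem_strs]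
    have htree : FinTree nn A := by
      refine ⟨⟨[], ?_⟩, ?_, ?_, ?_⟩
      · rw [memA]
        refine ⟨Nat.zero_le _, ?_⟩
        obtain ⟨x, hx, -⟩ := hK
        exact ⟨x, hx, fun i => absurd i.2 (by simp)⟩
      · intro s hs
        exact ((memA s).1 hs).1
      · intro s t hst ht
        obtain ⟨hlt, x, hxK, hxc⟩ := (memA t).1 ht
        exact (memA s).2 ⟨le_trans hst.length_le hlt, x, hxK, cyl_mono hst hxc⟩
      · intro s hs hlt
        obtain ⟨-, x, hxK, hxc⟩ := (memA s).1 hs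
        have hmem : x ∈ cyl (s ++ [x s.length]) := mem_cyl_append.2 ⟨hxc, rfl⟩
        have hlen : (s ++ [x s.length]).length ≤ nn := by
          simp [Nat.succ_le_of_lt hlt]
        cases hb : x s.length with
        | false =>
          left
          exact (memA _).2 ⟨by simpa [hb] using hlen, x, hxK, by rwa [hb] at hmem⟩
        | true =>
          right
          exact (memA _).2 ⟨by simpa [hb] using hlen, x, hxK, by rwa [hb] at hmem⟩
    refine Set.mem_biUnion (Finset.mem_coe.2 (Finset.mem_filter.2
      ⟨mem_Trees.2 htree, (memA τ).2 ⟨le_refl _, hK⟩⟩)) ?_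
    intro s hs
    rw [memA s]
    exact ⟨fun h => h.2, fun h => ⟨hs, h⟩⟩
  have h1 : μ {K : CC | (K.1 ∩ cyl τ).Nonempty}
      ≤ ∑ A ∈ (Trees nn).filter (fun A => τ ∈ A), μ (UA nn A) :=
    le_trans (measure_mono cover) (measure_biUnion_finset_le _ _)
  have hne : ∀ A ∈ (Trees nn).filter (fun A => τ ∈ A), μ (UA nn A) ≠ ⊤ :=
    fun A _ => measure_ne_top μ _
  have h2 : (μ {K : CC | (K.1 ∩ cyl τ).Nonempty}).toReal
      ≤ (∑ A ∈ (Trees nn).filter (fun A => τ ∈ A), μ (UA nn A)).toReal := by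
    apply ENNReal.toReal_mono _ h1
    exact (ENNReal.sum_lt_top.2 fun A hA => (hne A hA).lt_top).ne
  rw [ENNReal.toReal_sum hne] at h2
  have h3 : ∑ A ∈ (Trees nn).filter (fun A => τ ∈ A), (μ (UA nn A)).toReal
      = ∑ A ∈ (Trees nn).filter (fun A => τ ∈ A), Pw b0 b1 nn A := by
    refine Finset.sum_congr rfl fun A hA => ?_
    exact hμ.2 nn A (mem_Trees.1 (Finset.mem_filter.1 hA).1)
  rw [h3] at h2
  exact le_trans h2 (F_le hb1 hb01 hsum τ)

end

/-- for pairwise incomparable strings `σ₀, …, σ_n` and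
`Q = ⋃ₖ I(σₖ)`, removing `I(σ_j)` decreases the capacity by at most `(1 − b₁)^{|σ_j|}`. -/
theorem stmt_14 (b0 b1 : ℝ) (hb1 : 0 < b1) (hb01 : b1 ≤ b0) (hsum : b0 + b1 < 1)
    (μ : Measure CC) (hμ : IsBranching b0 b1 μ)
    (n : ℕ) (σ : Fin (n + 1) → List Bool)
    (hinc : ∀ j k : Fin (n + 1), j ≠ k → ¬ σ j <+: σ k)
    (j : Fin (n + 1)) :
    cap μ (⋃ k, cyl (σ k)) - cap μ (⋃ k ∈ {k : Fin (n + 1) | k ≠ j}, cyl (σ k)) ≤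
      (1 - b1) ^ (σ j).length := by
  classical
  haveI := hμ.1
  set Q : Set Cantor := ⋃ k, cyl (σ k) with hQ
  set Q' : Set Cantor := ⋃ k ∈ {k : Fin (n + 1) | k ≠ j}, cyl (σ k) with hQ'
  set Hτ : Set CC := {K : CC | (K.1 ∩ cyl (σ j)).Nonempty} with hHτ
  have hsub : {K : CC | (K.1 ∩ Q).Nonempty}
      ⊆ {K : CC | (K.1 ∩ Q').Nonempty} ∪ Hτ := by
    rintro K ⟨x, hxK, hxQ⟩
    rw [hQ, Set.mem_iUnion] at hxQ
    obtain ⟨k, hk⟩ := hxQ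
    by_cases hkj : k = j
    · subst hkj
      exact Or.inr ⟨x, hxK, hk⟩
    · refine Or.inl ⟨x, hxK, ?_⟩
      rw [hQ']
      exact Set.mem_biUnion hkj hk
  have hmeas : μ {K : CC | (K.1 ∩ Q).Nonempty}
      ≤ μ {K : CC | (K.1 ∩ Q').Nonempty} + μ Hτ :=
    le_trans (measure_mono hsub) (measure_union_le _ _)
  have hne1 : μ {K : CC | (K.1 ∩ Q').Nonempty} ≠ ⊤ := measure_ne_top μ _
  have hne2 : μ Hτ ≠ ⊤ := measure_ne_top μ _
  have h2 : (μ {K : CC | (K.1 ∩ Q).Nonempty}).toReal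
      ≤ (μ {K : CC | (K.1 ∩ Q').Nonempty}).toReal + (μ Hτ).toReal := by
    have := ENNReal.toReal_mono (ENNReal.add_ne_top.2 ⟨hne1, hne2⟩) hmeas
    rwa [ENNReal.toReal_add hne1 hne2] at this
  have h3 := hit_le hb1 hb01 hsum μ hμ (σ j)
  have hcap1 : cap μ Q = (μ {K : CC | (K.1 ∩ Q).Nonempty}).toReal := rfl
  have hcap2 : cap μ Q' = (μ {K : CC | (K.1 ∩ Q').Nonempty}).toReal := rfl
  rw [← hHτ] at h3
  linarith [h2, h3, hcap1, hcap2]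
end

section
/- Let b̂ = 1 − √2/2 and suppose b̂ ≤ b < 1/2. Define the sequence (p_n) of reals by p₀ = 1 and p_{n+1} = f_b(p_n), where f_b(p) = (2b² − 4b + 2)p − (1 − 2b)²p². Then the sequence (p_n) is antitone, satisfies 0 ≤ p_n ≤ 1 for all n, and lim_{n→∞} p_n = 0. -/
open Filter Topology

/-- for `1 − √2/2 ≤ b < 1/2`, the sequence `p₀ = 1`,
`p_{n+1} = (2b² − 4b + 2)pₙ − (1 − 2b)²pₙ²` is antitone, stays in `[0,1]`,
and tends to `0`. -/
theorem stmt_16 (b : ℝ) (hb1 : 1 - Real.sqrt 2 / 2 ≤ b) (hb2 : b < 1 / 2)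
    (p : ℕ → ℝ) (hp0 : p 0 = 1)
    (hrec : ∀ n : ℕ,
      p (n + 1) = (2 * b ^ 2 - 4 * b + 2) * p n - (1 - 2 * b) ^ 2 * p n ^ 2) :
    Antitone p ∧ (∀ n, 0 ≤ p n ∧ p n ≤ 1) ∧ Tendsto p atTop (𝓝 0) := by
  have hs2 : Real.sqrt 2 ^ 2 = 2 := Real.sq_sqrt (by norm_num)
  have hs0 : (0 : ℝ) ≤ Real.sqrt 2 := Real.sqrt_nonneg 2
  have hsle : Real.sqrt 2 ≤ 2 := by nlinarith
  have hb0 : (0 : ℝ) ≤ b := by nlinarith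
  have hC : 0 < (1 - 2 * b) ^ 2 := by nlinarith
  have hA1 : 2 * b ^ 2 - 4 * b + 2 ≤ 1 := by nlinarith [sq_nonneg (b - 1 + Real.sqrt 2 / 2)]
  have hAC : (0:ℝ) ≤ (2 * b ^ 2 - 4 * b + 2) - (1 - 2 * b) ^ 2 := by nlinarith
  have hbound : ∀ n, 0 ≤ p n ∧ p n ≤ 1 := by
    intro n
    induction n with
    | zero => rw [hp0]; norm_num
    | succ k ih =>
      obtain ⟨h0, h1⟩ := ih
      rw [hrec k]
      constructor
      · nlinarith [mul_nonneg h0 hAC, mul_nonneg (mul_nonneg hC.le h0) (sub_nonneg.2 h1)]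
      · nlinarith [mul_nonneg (mul_nonneg hC.le h0) h0, mul_nonneg h0 (sub_nonneg.2 hA1)]
  have hstep : ∀ n, p (n + 1) ≤ p n := by
    intro n
    obtain ⟨h0, h1⟩ := hbound n
    rw [hrec n]
    nlinarith
  have hant : Antitone p := antitone_nat_of_succ_le hstep
  have hbdd : BddBelow (Set.range p) := ⟨0, by rintro x ⟨n, rfl⟩; exact (hbound n).1⟩
  have hT : Tendsto p atTop (𝓝 (⨅ n, p n)) := tendsto_atTop_ciInf hant hbdd
  set L := ⨅ n, p n with hLdef
  have hL0 : 0 ≤ L := le_ciInf fun n => (hbound n).1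
  have hT1 : Tendsto (fun n => p (n + 1)) atTop (𝓝 L) := hT.comp (tendsto_add_atTop_nat 1)
  have hT2 : Tendsto (fun n => (2 * b ^ 2 - 4 * b + 2) * p n - (1 - 2 * b) ^ 2 * p n ^ 2)
      atTop (𝓝 ((2 * b ^ 2 - 4 * b + 2) * L - (1 - 2 * b) ^ 2 * L ^ 2)) := by
    exact (tendsto_const_nhds.mul hT).sub (tendsto_const_nhds.mul (hT.pow 2))
  have heq : L = (2 * b ^ 2 - 4 * b + 2) * L - (1 - 2 * b) ^ 2 * L ^ 2 := by
    refine tendsto_nhds_unique hT1 ?_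
    simpa only [← hrec] using hT2
  have hLz : L = 0 := by
    rcases hL0.eq_or_lt with h | h
    · exact h.symm
    · exfalso
      nlinarith [mul_pos hC (mul_pos h h), mul_nonneg (sub_nonneg.2 hA1) h.le]
  exact ⟨hant, hbound, hLz ▸ hT⟩
end

section
/- Let b̂ = 1 − √2/2 and suppose 0 < b < b̂. Let m_b = (2b² − 4b + 1)/(1 − 2b)² and define the sequence (p_n) of reals by p₀ = 1 and p_{n+1} = f_b(p_n), where f_b(p) = (2b² − 4b + 2)p − (1 − 2b)²p². Then 0 < m_b < 1, f_b(m_b) = m_b, p_n ≥ m_b for all n, the sequence (p_n) is antitone, and lim_{n→∞} p_n = m_b. -/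
open Filter Topology

/-- for `0 < b < 1 − √2/2` and `m_b = (2b² − 4b + 1)/(1 − 2b)²`, the sequence
`p₀ = 1`, `p_{n+1} = (2b² − 4b + 2)pₙ − (1 − 2b)²pₙ²` satisfies `0 < m_b < 1`,
`f_b(m_b) = m_b`, `pₙ ≥ m_b`, is antitone, and tends to `m_b`. -/
theorem stmt_17 (b : ℝ) (hb0 : 0 < b) (hb : b < 1 - Real.sqrt 2 / 2)
    (p : ℕ → ℝ) (hp0 : p 0 = 1)
    (hrec : ∀ n : ℕ,
      p (n + 1) = (2 * b ^ 2 - 4 * b + 2) * p n - (1 - 2 * b) ^ 2 * p n ^ 2) :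
    0 < (2 * b ^ 2 - 4 * b + 1) / (1 - 2 * b) ^ 2 ∧
    (2 * b ^ 2 - 4 * b + 1) / (1 - 2 * b) ^ 2 < 1 ∧
    (2 * b ^ 2 - 4 * b + 2) * ((2 * b ^ 2 - 4 * b + 1) / (1 - 2 * b) ^ 2) -
        (1 - 2 * b) ^ 2 * ((2 * b ^ 2 - 4 * b + 1) / (1 - 2 * b) ^ 2) ^ 2 =
      (2 * b ^ 2 - 4 * b + 1) / (1 - 2 * b) ^ 2 ∧
    (∀ n, (2 * b ^ 2 - 4 * b + 1) / (1 - 2 * b) ^ 2 ≤ p n) ∧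
    Antitone p ∧
    Tendsto p atTop (𝓝 ((2 * b ^ 2 - 4 * b + 1) / (1 - 2 * b) ^ 2)) := by
  have hs2 : Real.sqrt 2 ^ 2 = 2 := Real.sq_sqrt (by norm_num)
  have hsnn : (0:ℝ) ≤ Real.sqrt 2 := Real.sqrt_nonneg 2
  have hb2 : b < 1 / 2 := by nlinarith
  have hc : (0:ℝ) < (1 - 2 * b) ^ 2 := by nlinarith
  have hq : 0 < 2 * b ^ 2 - 4 * b + 1 := by nlinarith
  set m := (2 * b ^ 2 - 4 * b + 1) / (1 - 2 * b) ^ 2 with hm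
  have hmc : m * (1 - 2 * b) ^ 2 = 2 * b ^ 2 - 4 * b + 1 := by
    rw [hm, div_mul_cancel₀ _ hc.ne']
  have hm0 : 0 < m := div_pos hq hc
  have hm1 : m < 1 := by rw [hm, div_lt_one hc]; nlinarith
  have hfix : (2 * b ^ 2 - 4 * b + 2) * m - (1 - 2 * b) ^ 2 * m ^ 2 = m := by
    rw [hm]; field_simp; ring
  -- key step equation: p (n+1) - m = (p n - m) * (1 - c * p n)
  have hstep : ∀ n, p (n + 1) - m = (p n - m) * (1 - (1 - 2 * b) ^ 2 * p n) := by
    intro n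
    linear_combination hrec n - p n * hmc
  have key : ∀ n, m ≤ p n ∧ p n ≤ 1 := by
    intro n
    induction n with
    | zero => rw [hp0]; exact ⟨hm1.le, le_refl 1⟩
    | succ n ih =>
      obtain ⟨h1, h2⟩ := ih
      have hfac : 0 ≤ 1 - (1 - 2 * b) ^ 2 * p n := by nlinarith
      constructor
      · nlinarith [hstep n, mul_nonneg (sub_nonneg.2 h1) hfac]
      · have hle : p (n + 1) ≤ p n := by nlinarith [hstep n, mul_nonneg (sub_nonneg.2 h1) (mul_nonneg hc.le (hm0.le.trans h1))]
        linarith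
  have hdec : ∀ n, p (n + 1) ≤ p n := by
    intro n
    obtain ⟨h1, h2⟩ := key n
    nlinarith [hstep n, mul_nonneg (sub_nonneg.2 h1) (mul_nonneg hc.le (hm0.le.trans h1))]
  set r : ℝ := 4 * b - 2 * b ^ 2 with hr
  have hr0 : 0 < r := by nlinarith
  have hr1 : r < 1 := by nlinarith
  have hbound : ∀ n, p n - m ≤ r ^ n * (1 - m) := by
    intro n
    induction n with
    | zero => simp [hp0]
    | succ n ih =>
      obtain ⟨h1, h2⟩ := key n
      have hfac : 1 - (1 - 2 * b) ^ 2 * p n ≤ r := by nlinarith [hmc]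
      have hfacnn : 0 ≤ 1 - (1 - 2 * b) ^ 2 * p n := by nlinarith
      have h3 : p (n + 1) - m ≤ (p n - m) * r := by
        rw [hstep n]
        exact mul_le_mul_of_nonneg_left hfac (sub_nonneg.2 h1) |>.trans_eq rfl
      calc p (n + 1) - m ≤ (p n - m) * r := h3
        _ ≤ (r ^ n * (1 - m)) * r := by
            exact mul_le_mul_of_nonneg_right ih hr0.le
        _ = r ^ (n + 1) * (1 - m) := by ring
  have hlim : Tendsto (fun n => m + r ^ n * (1 - m)) atTop (𝓝 (m + 0 * (1 - m))) := by
    exact tendsto_const_nhds.add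
      ((tendsto_pow_atTop_nhds_zero_of_lt_one hr0.le hr1).mul_const (1 - m))
  have hlim' : Tendsto (fun n => m + r ^ n * (1 - m)) atTop (𝓝 m) := by
    simpa using hlim
  have htend : Tendsto p atTop (𝓝 m) := by
    apply tendsto_of_tendsto_of_tendsto_of_le_of_le tendsto_const_nhds hlim'
    · exact fun n => (key n).1
    · intro n
      show p n ≤ m + r ^ n * (1 - m)
      linarith [hbound n]
  exact ⟨hm0, hm1, hfix, fun n => (key n).1,
    antitone_nat_of_succ_le hdec, htend⟩
end

section
/- Let μ* be any Borel probability measure on C and let q be a real number. Then the set {Q ∈ C : μ*({K ∈ C : K ∩ Q ≠ ∅}) < q} is open in the hit-or-miss topology on C. -/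
open Set MeasureTheory Topology Filter

lemma cyl_open (n : ℕ) (x : Cantor) : IsOpen {x' : Cantor | ∀ i < n, x' i = x i} := by
  have h : {x' : Cantor | ∀ i < n, x' i = x i}
      = ⋂ i ∈ Finset.range n, (fun x' : Cantor => x' i) ⁻¹' {x i} := by
    ext z; simp
  rw [h]
  exact isOpen_biInter_finset fun i _ =>
    (continuous_apply i).isOpen_preimage _ (isOpen_discrete _)

/-- for any Borel probability measure `μ*` on `C` and any real `q`, the set
`{Q ∈ C : μ*({K : K ∩ Q ≠ ∅}) < q}` is open in the hit-or-miss topology. -/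
theorem stmt_19 (μ : Measure CC) (hμ : IsProbabilityMeasure μ) (q : ℝ) :
    IsOpen {Q : CC | (μ {K : CC | (K.1 ∩ Q.1).Nonempty}).toReal < q} := by
  haveI := hμ
  rw [isOpen_iff_forall_mem_open]
  intro Q hQ
  -- approximations of Q.1 by clopen sets
  set T : ℕ → Set Cantor := fun n => {x | ∃ y ∈ Q.1, ∀ i < n, x i = y i} with hTdef
  have hTopen : ∀ n, IsOpen (T n) := by
    intro n
    have h : T n = ⋃ y ∈ Q.1, {x : Cantor | ∀ i < n, x i = y i} := by
      ext x; simp [hTdef]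
    rw [h]
    exact isOpen_biUnion fun y _ => cyl_open n y
  have hTclosed : ∀ n, IsClosed (T n) := by
    intro n
    rw [← isOpen_compl_iff]
    have h : (T n)ᶜ = ⋃ x ∈ (T n)ᶜ, {x' : Cantor | ∀ i < n, x' i = x i} := by
      ext z
      constructor
      · intro hz; exact mem_biUnion hz fun i _ => rfl
      · simp only [mem_iUnion, mem_compl_iff, mem_setOf_eq]
        rintro ⟨x, hx, hagree⟩ ⟨y, hy, hzy⟩
        exact hx ⟨y, hy, fun i hi => (hagree i hi).symm.trans (hzy i hi)⟩
    rw [h]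
    exact isOpen_biUnion fun x _ => cyl_open n x
  have hTanti : Antitone T := by
    intro m n hmn x hx
    obtain ⟨y, hy, h⟩ := hx
    exact ⟨y, hy, fun i hi => h i (lt_of_lt_of_le hi hmn)⟩
  have hQT : ∀ n, Q.1 ⊆ T n := fun n x hx => ⟨x, hx, fun _ _ => rfl⟩
  set S : ℕ → Set CC := fun n => {K | (K.1 ∩ T n).Nonempty} with hSdef
  have hSanti : Antitone S := fun m n hmn K hK =>
    hK.mono (inter_subset_inter_right _ (hTanti hmn))
  have hSopen : ∀ n, IsOpen (S n) :=
    fun n => TopologicalSpace.GenerateOpen.basic _ (Or.inl ⟨T n, hTopen n, rfl⟩)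
  have hSmeas : ∀ n, MeasurableSet (S n) := fun n =>
    MeasurableSpace.measurableSet_generateFrom (hSopen n)
  -- the intersection of the S n is exactly the hitting set of Q
  have hInter : (⋂ n, S n) = {K : CC | (K.1 ∩ Q.1).Nonempty} := by
    ext K
    simp only [mem_iInter, mem_setOf_eq]
    constructor
    · intro h
      have hcpt : ∀ n, IsCompact (K.1 ∩ T n) :=
        fun n => (K.2.2.inter (hTclosed n)).isCompact
      have hne : (⋂ n, K.1 ∩ T n).Nonempty := by
        apply IsCompact.nonempty_iInter_of_sequence_nonempty_isCompact_isClosed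
          (fun n => K.1 ∩ T n)
        · intro n; exact inter_subset_inter_right _ (hTanti (Nat.le_succ n))
        · exact h
        · exact hcpt 0
        · exact fun n => K.2.2.inter (hTclosed n)
      obtain ⟨x, hx⟩ := hne
      simp only [mem_iInter, mem_inter_iff] at hx
      have hxK : x ∈ K.1 := (hx 0).1
      have hxT : ∀ n, x ∈ T n := fun n => (hx n).2
      -- build a sequence in Q converging to x
      choose y hyQ hyagree using hxT
      have hconv : Filter.Tendsto y atTop (𝓝 x) := by
        rw [tendsto_pi_nhds]
        intro i
        apply tendsto_nhds_of_eventually_eq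
        filter_upwards [eventually_ge_atTop (i + 1)] with n hn
        exact (hyagree n i (by omega)).symm
      have hxQ : x ∈ Q.1 := Q.2.2.mem_of_tendsto hconv (Eventually.of_forall hyQ)
      exact ⟨x, hxK, hxQ⟩
    · intro h n
      exact h.mono (inter_subset_inter_right _ (hQT n))
  have hfin : μ {K : CC | (K.1 ∩ Q.1).Nonempty} ≠ (⊤ : ENNReal) := measure_ne_top μ _
  have hlt : μ {K : CC | (K.1 ∩ Q.1).Nonempty} < ENNReal.ofReal q :=
    (ENNReal.lt_ofReal_iff_toReal_lt hfin).2 hQ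
  have hlim : Tendsto (μ ∘ S) atTop (𝓝 (μ (⋂ n, S n))) :=
    tendsto_measure_iInter_atTop (fun n => (hSmeas n).nullMeasurableSet) hSanti
      ⟨0, measure_ne_top μ _⟩
  rw [hInter] at hlim
  obtain ⟨n, hn⟩ := (hlim.eventually (gt_mem_nhds hlt)).exists
  refine ⟨{Q' : CC | Q'.1 ⊆ T n}, ?_, ?_, hQT n⟩
  · intro Q' hQ'
    have hsub : {K : CC | (K.1 ∩ Q'.1).Nonempty} ⊆ S n :=
      fun K hK => hK.mono (inter_subset_inter_right _ hQ')
    have : μ {K : CC | (K.1 ∩ Q'.1).Nonempty} < ENNReal.ofReal q :=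
      lt_of_le_of_lt (measure_mono hsub) hn
    exact (ENNReal.lt_ofReal_iff_toReal_lt (measure_ne_top μ _)).1 this
  · exact TopologicalSpace.GenerateOpen.basic _ (Or.inr ⟨T n, hTopen n, rfl⟩)
end
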